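/- Suppose Property IR holds for real symmetric n×n matrices A_0, A_1, A_2: there exist μ̆_1, μ̆_2, μ̆_3 > 0 and vectors x̆_1, x̆_2 ∈ ℝ^n such that Z̆ := A_0 + μ̆_1 A_1 + μ̆_2 A_2 + μ̆_3 I ⪰ 0, span{x̆_1, x̆_2} = Null(Z̆), x̆_1^T A_1 x̆_1 = x̆_2^T A_1 x̆_2 = 0, x̆_1^T A_1 x̆_2 ≠ 0, and x̆_1^T A_2 x̆_1 < 0 < x̆_2^T A_2 x̆_2. Then there exist α, β > 0 such that X̆ := α x̆_1 x̆_1^T + β x̆_2 x̆_2^T satisfies X̆ ⪰ 0, tr(A_1 X̆) = tr(A_2 X̆) = 0, tr(X̆) = 1, and tr(A_0 X̆) = −μ̆_3 < 0. -/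

import Mathlib

open Matrix

lemma trace_mul_vecMulVec' {n : ℕ} (A : Matrix (Fin n) (Fin n) ℝ) (x y : Fin n → ℝ) :
    (A * vecMulVec x y).trace = y ⬝ᵥ A.mulVec x := by
  simp only [trace, diag, Matrix.mul_apply, vecMulVec_apply, dotProduct, mulVec,
    Finset.mul_sum]
  apply Finset.sum_congr rfl
  intro i _
  apply Finset.sum_congr rfl
  intro j _
  ring

lemma trace_vecMulVec' {n : ℕ} (x : Fin n → ℝ) :
    (vecMulVec x x).trace = x ⬝ᵥ x := by
  simp [trace, diag, vecMulVec_apply, dotProduct]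

lemma posSemidef_vecMulVec' {n : ℕ} (x : Fin n → ℝ) : (vecMulVec x x).PosSemidef := by
  rw [posSemidef_iff_dotProduct_mulVec]
  constructor
  · ext i j
    simp [conjTranspose, vecMulVec_apply, mul_comm]
  · intro v
    have h : star v ⬝ᵥ (vecMulVec x x *ᵥ v) = (x ⬝ᵥ v) * (x ⬝ᵥ v) := by
      simp only [star_trivial, dotProduct, mulVec, vecMulVec_apply, Finset.mul_sum,
        Finset.sum_mul]
      apply Finset.sum_congr rfl
      intro i _
      apply Finset.sum_congr rfl
      intro j _
      ring
    rw [h]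
    exact mul_self_nonneg _

lemma posSemidef_smul' {n : ℕ} {M : Matrix (Fin n) (Fin n) ℝ} (hM : M.PosSemidef)
    {c : ℝ} (hc : 0 ≤ c) : (c • M).PosSemidef := by
  rw [posSemidef_iff_dotProduct_mulVec]
  constructor
  · unfold Matrix.IsHermitian
    rw [conjTranspose_smul, hM.1]
    simp
  · intro v
    rw [smul_mulVec, dotProduct_smul, smul_eq_mul]
    exact mul_nonneg hc (hM.dotProduct_mulVec_nonneg v)

theorem stmt_17 (n : ℕ) (A₀ A₁ A₂ : Matrix (Fin n) (Fin n) ℝ)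
    (hA₀ : A₀.IsSymm) (hA₁ : A₁.IsSymm) (hA₂ : A₂.IsSymm)
    (μ₁ μ₂ μ₃ : ℝ) (hμ₁ : 0 < μ₁) (hμ₂ : 0 < μ₂) (hμ₃ : 0 < μ₃)
    (x₁ x₂ : Fin n → ℝ)
    (hZ : (A₀ + μ₁ • A₁ + μ₂ • A₂ + μ₃ • (1 : Matrix (Fin n) (Fin n) ℝ)).PosSemidef)
    (hnull : Submodule.span ℝ {x₁, x₂} =
      LinearMap.ker (A₀ + μ₁ • A₁ + μ₂ • A₂ + μ₃ • (1 : Matrix (Fin n) (Fin n) ℝ)).mulVecLin)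
    (h11 : x₁ ⬝ᵥ A₁.mulVec x₁ = 0) (h12 : x₂ ⬝ᵥ A₁.mulVec x₂ = 0)
    (hcross : x₁ ⬝ᵥ A₁.mulVec x₂ ≠ 0)
    (h21 : x₁ ⬝ᵥ A₂.mulVec x₁ < 0) (h22 : 0 < x₂ ⬝ᵥ A₂.mulVec x₂) :
    ∃ α β : ℝ, 0 < α ∧ 0 < β ∧
      (α • vecMulVec x₁ x₁ + β • vecMulVec x₂ x₂).PosSemidef ∧
      (A₁ * (α • vecMulVec x₁ x₁ + β • vecMulVec x₂ x₂)).trace = 0 ∧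
      (A₂ * (α • vecMulVec x₁ x₁ + β • vecMulVec x₂ x₂)).trace = 0 ∧
      (α • vecMulVec x₁ x₁ + β • vecMulVec x₂ x₂).trace = 1 ∧
      (A₀ * (α • vecMulVec x₁ x₁ + β • vecMulVec x₂ x₂)).trace = -μ₃ := by
  -- nonvanishing of x₁, x₂
  have hx₁ : x₁ ≠ 0 := by
    rintro rfl; exact hcross (zero_dotProduct _)
  have hx₂ : x₂ ≠ 0 := by
    rintro rfl; exact hcross (by simp)
  have hnn : ∀ y : Fin n → ℝ, y ≠ 0 → 0 < y ⬝ᵥ y := by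
    intro y hy
    have h0 : 0 ≤ y ⬝ᵥ y := by
      simp only [dotProduct]
      exact Finset.sum_nonneg fun i _ => mul_self_nonneg _
    rcases lt_or_eq_of_le h0 with h | h
    · exact h
    · exact absurd (dotProduct_self_eq_zero.mp h.symm) hy
  have hn₁ : 0 < x₁ ⬝ᵥ x₁ := hnn x₁ hx₁
  have hn₂ : 0 < x₂ ⬝ᵥ x₂ := hnn x₂ hx₂
  set a : ℝ := -(x₁ ⬝ᵥ A₂.mulVec x₁) with ha
  set b : ℝ := x₂ ⬝ᵥ A₂.mulVec x₂ with hb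
  have hapos : 0 < a := by simpa [ha] using h21
  have hbpos : 0 < b := h22
  set s : ℝ := b * (x₁ ⬝ᵥ x₁) + a * (x₂ ⬝ᵥ x₂) with hs
  have hspos : 0 < s := add_pos (mul_pos hbpos hn₁) (mul_pos hapos hn₂)
  refine ⟨b / s, a / s, div_pos hbpos hspos, div_pos hapos hspos, ?_, ?_, ?_, ?_, ?_⟩
  -- PSD
  · exact (posSemidef_smul' (posSemidef_vecMulVec' x₁) (div_pos hbpos hspos).le).add
      (posSemidef_smul' (posSemidef_vecMulVec' x₂) (div_pos hapos hspos).le)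
  -- trace A₁
  · rw [Matrix.mul_add, trace_add, Matrix.mul_smul, Matrix.mul_smul, trace_smul, trace_smul,
      trace_mul_vecMulVec', trace_mul_vecMulVec', h11, h12]
    simp
  -- trace A₂
  · rw [Matrix.mul_add, trace_add, Matrix.mul_smul, Matrix.mul_smul, trace_smul, trace_smul,
      trace_mul_vecMulVec', trace_mul_vecMulVec']
    have h21' : x₁ ⬝ᵥ A₂ *ᵥ x₁ = -a := by rw [ha, neg_neg]
    simp only [smul_eq_mul, h21']
    ring
  -- trace X = 1
  · rw [trace_add, trace_smul, trace_smul, trace_vecMulVec', trace_vecMulVec']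
    have hs' : s ≠ 0 := hspos.ne'
    simp only [smul_eq_mul]
    field_simp
    try linarith [hs]
  -- trace A₀
  · have hker : ∀ x ∈ Submodule.span ℝ ({x₁, x₂} : Set (Fin n → ℝ)),
        (A₀ + μ₁ • A₁ + μ₂ • A₂ + μ₃ • (1 : Matrix (Fin n) (Fin n) ℝ)) *ᵥ x = 0 := by
      intro x hx
      rw [hnull] at hx
      simpa [mulVecLin, add_mulVec, smul_mulVec] using hx
    have hz₁ : (A₀ + μ₁ • A₁ + μ₂ • A₂ + μ₃ • (1 : Matrix (Fin n) (Fin n) ℝ)) *ᵥ x₁ = 0 :=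
      hker x₁ (Submodule.subset_span (by simp))
    have hz₂ : (A₀ + μ₁ • A₁ + μ₂ • A₂ + μ₃ • (1 : Matrix (Fin n) (Fin n) ℝ)) *ᵥ x₂ = 0 :=
      hker x₂ (Submodule.subset_span (by simp))
    have e₁ : x₁ ⬝ᵥ A₀ *ᵥ x₁ = μ₂ * a - μ₃ * (x₁ ⬝ᵥ x₁) := by
      have := congrArg (fun v => x₁ ⬝ᵥ v) hz₁
      simp only [add_mulVec, smul_mulVec, one_mulVec, dotProduct_add, dotProduct_smul,
        dotProduct_zero, smul_eq_mul] at this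
      rw [h11] at this
      rw [ha]; linarith
    have e₂ : x₂ ⬝ᵥ A₀ *ᵥ x₂ = -(μ₂ * b) - μ₃ * (x₂ ⬝ᵥ x₂) := by
      have := congrArg (fun v => x₂ ⬝ᵥ v) hz₂
      simp only [add_mulVec, smul_mulVec, one_mulVec, dotProduct_add, dotProduct_smul,
        dotProduct_zero, smul_eq_mul] at this
      rw [h12] at this
      rw [hb]; linarith
    rw [Matrix.mul_add, trace_add, Matrix.mul_smul, Matrix.mul_smul, trace_smul, trace_smul,
      trace_mul_vecMulVec', trace_mul_vecMulVec', e₁, e₂]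
    have hs' : s ≠ 0 := hspos.ne'
    simp only [smul_eq_mul]
    field_simp
    linear_combination (-μ₃) * hs
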